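/- arXiv:1809.04438 — 3 statements merged into one kernel-verified Lean document; each statement's English description precedes it below -/
import Mathlib

section
/- For all α₁ > 0 and α₂ > 0 there exists a constant C = C(α₁, α₂) > 0, depending only on α₁ and α₂ (in particular independent of Δt and m), such that for every Δt > 0 and every integer m ≥ 1, Δt · Σ_{j=1}^{m} t_{m−j+1}^{−1+α₁} · t_j^{−1+α₂} ≤ C · t_m^{−1+α₁+α₂}. -/
open Real Finset

/-- Power sum bound: `∑_{j=1}^m j^{β-1} ≤ (1/β + 1) m^β` for `β > 0`. -/
lemma aux_pow_sum {β : ℝ} (hβ : 0 < β) (m : ℕ) :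
    ∑ j ∈ Finset.Icc 1 m, (j : ℝ) ^ (β - 1) ≤ (1 / β + 1) * (m : ℝ) ^ β := by
  rcases le_or_gt β 1 with hβ1 | hβ1
  · -- β ≤ 1 : induction with Bernoulli step
    have key : ∑ j ∈ Finset.Icc 1 m, (j : ℝ) ^ (β - 1) ≤ (1 / β) * (m : ℝ) ^ β := by
      induction m with
      | zero => simp [Real.zero_rpow (ne_of_gt hβ)]
      | succ m ih =>
        rw [Finset.sum_Icc_succ_top (by omega)]
        have hn : (1 : ℝ) ≤ (m : ℝ) + 1 := by have := Nat.cast_nonneg (α := ℝ) m; linarith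
        have hn0 : (0 : ℝ) < (m : ℝ) + 1 := by positivity
        -- Bernoulli: (1 - 1/(m+1))^β ≤ 1 - β/(m+1)
        have hb := rpow_one_add_le_one_add_mul_self
          (s := -(1 / ((m : ℝ) + 1))) (p := β)
          (by rw [neg_le, neg_neg]; rw [div_le_one hn0]; linarith) hβ.le hβ1
        -- turn it into (m)^β ≤ (m+1)^β - β (m+1)^(β-1)
        have h1 : (1 : ℝ) + -(1 / ((m : ℝ) + 1)) = (m : ℝ) / ((m : ℝ) + 1) := by
          field_simp; ring
        rw [h1] at hb
        have h2 : ((m : ℝ) / ((m : ℝ) + 1)) ^ β = (m : ℝ) ^ β / ((m : ℝ) + 1) ^ β :=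
          Real.div_rpow (by positivity) (by positivity) β
        rw [h2] at hb
        have hpow : (0 : ℝ) < ((m : ℝ) + 1) ^ β := Real.rpow_pos_of_pos hn0 β
        have hb' : (m : ℝ) ^ β ≤ (1 + β * -(1 / ((m : ℝ) + 1))) * ((m : ℝ) + 1) ^ β := by
          rw [div_le_iff₀ hpow] at hb; linarith
        have h3 : (1 + β * -(1 / ((m : ℝ) + 1))) * ((m : ℝ) + 1) ^ β
            = ((m : ℝ) + 1) ^ β - β * ((m : ℝ) + 1) ^ (β - 1) := by
          have : ((m : ℝ) + 1) ^ (β - 1) = ((m : ℝ) + 1) ^ β / ((m : ℝ) + 1) := by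
            rw [Real.rpow_sub hn0, Real.rpow_one]
          rw [this]; field_simp; ring
        rw [h3] at hb'
        have step : ((m : ℝ) + 1) ^ (β - 1) ≤ (1 / β) * (((m : ℝ) + 1) ^ β - (m : ℝ) ^ β) := by
          have h4 : β * (((m : ℝ) + 1) ^ (β - 1)) ≤ ((m : ℝ) + 1) ^ β - (m : ℝ) ^ β := by
            linarith
          have h5 : (0 : ℝ) < 1 / β := by positivity
          calc ((m : ℝ) + 1) ^ (β - 1)
              = (1 / β) * (β * (((m : ℝ) + 1) ^ (β - 1))) := by field_simp
            _ ≤ _ := mul_le_mul_of_nonneg_left h4 h5.le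
        push_cast
        linarith
    have : (0:ℝ) ≤ (m : ℝ) ^ β := Real.rpow_nonneg (by positivity) β
    nlinarith
  · -- β > 1 : each term ≤ m^(β-1)
    calc ∑ j ∈ Finset.Icc 1 m, (j : ℝ) ^ (β - 1)
        ≤ ∑ _j ∈ Finset.Icc 1 m, (m : ℝ) ^ (β - 1) := by
          apply Finset.sum_le_sum
          intro j hj
          simp only [Finset.mem_Icc] at hj
          exact Real.rpow_le_rpow (by positivity) (by exact_mod_cast hj.2) (by linarith)
      _ = (m : ℝ) * (m : ℝ) ^ (β - 1) := by
          rw [Finset.sum_const, Nat.card_Icc]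
          simp [nsmul_eq_mul]
      _ ≤ (1 / β + 1) * (m : ℝ) ^ β := by
          rcases Nat.eq_zero_or_pos m with h | h
          · simp [h, Real.zero_rpow (by linarith : β ≠ 0)]
          have hm0 : (0:ℝ) < m := by exact_mod_cast h
          have : (m : ℝ) * (m : ℝ) ^ (β - 1) = (m : ℝ) ^ β := by
            rw [Real.rpow_sub hm0, Real.rpow_one]; field_simp
          rw [this]
          have : (0:ℝ) < (m : ℝ) ^ β := Real.rpow_pos_of_pos hm0 β
          have hβ' : 0 < 1 / β := by positivity
          nlinarith

/-- If `M/2 ≤ x ≤ M`, then `x^(α-1) ≤ (2^(1-α)+1) M^(α-1)`. -/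
lemma aux_half_bound {α : ℝ} (hα : 0 < α) {x M : ℝ} (hM : 0 < M)
    (hx1 : M / 2 ≤ x) (hx2 : x ≤ M) :
    x ^ (α - 1) ≤ ((2 : ℝ) ^ (1 - α) + 1) * M ^ (α - 1) := by
  have hx0 : 0 < x := lt_of_lt_of_le (by positivity) hx1
  have hMp : (0 : ℝ) ≤ M ^ (α - 1) := Real.rpow_nonneg hM.le _
  have h2p : (0 : ℝ) < (2 : ℝ) ^ (1 - α) := Real.rpow_pos_of_pos (by norm_num) _
  rcases le_or_gt α 1 with h | h
  · have hanti : x ^ (α - 1) ≤ (M / 2) ^ (α - 1) :=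
      Real.rpow_le_rpow_of_nonpos (by positivity) hx1 (by linarith)
    have heq : (M / 2) ^ (α - 1) = (2 : ℝ) ^ (1 - α) * M ^ (α - 1) := by
      rw [div_eq_mul_inv, Real.mul_rpow hM.le (by norm_num),
        Real.inv_rpow (by norm_num : (0:ℝ) ≤ 2), ← Real.rpow_neg (by norm_num : (0:ℝ) ≤ 2)]
      ring_nf
    rw [heq] at hanti
    nlinarith
  · have : x ^ (α - 1) ≤ M ^ (α - 1) := Real.rpow_le_rpow hx0.le hx2 (by linarith)
    nlinarith

/-- Reflection of a sum over `Icc 1 m`. -/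
lemma aux_sum_reflect (m : ℕ) (f : ℕ → ℝ) :
    ∑ j ∈ Finset.Icc 1 m, f (m - j + 1) = ∑ i ∈ Finset.Icc 1 m, f i := by
  refine Finset.sum_nbij' (i := fun j => m - j + 1) (j := fun i => m - i + 1)
    ?_ ?_ ?_ ?_ ?_
  · intro a ha; simp only [Finset.mem_Icc] at *; omega
  · intro a ha; simp only [Finset.mem_Icc] at *; omega
  · intro a ha; simp only [Finset.mem_Icc] at ha; omega
  · intro a ha; simp only [Finset.mem_Icc] at ha; omega
  · intro a ha; rfl

/-- Key dimensionless estimate. -/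
lemma aux_key {α₁ α₂ : ℝ} (hα₁ : 0 < α₁) (hα₂ : 0 < α₂) (m : ℕ) (hm : 1 ≤ m) :
    ∑ j ∈ Finset.Icc 1 m, ((m - j + 1 : ℕ) : ℝ) ^ (α₁ - 1) * (j : ℝ) ^ (α₂ - 1)
      ≤ (((2:ℝ) ^ (1 - α₁) + 1) * (1 / α₂ + 1) + ((2:ℝ) ^ (1 - α₂) + 1) * (1 / α₁ + 1))
          * (m : ℝ) ^ (α₁ + α₂ - 1) := by
  set K₁ : ℝ := (2:ℝ) ^ (1 - α₁) + 1 with hK₁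
  set K₂ : ℝ := (2:ℝ) ^ (1 - α₂) + 1 with hK₂
  have hm0 : (0 : ℝ) < m := by exact_mod_cast hm
  -- termwise bound
  have hterm : ∀ j ∈ Finset.Icc 1 m,
      ((m - j + 1 : ℕ) : ℝ) ^ (α₁ - 1) * (j : ℝ) ^ (α₂ - 1)
        ≤ K₁ * (m : ℝ) ^ (α₁ - 1) * (j : ℝ) ^ (α₂ - 1)
          + K₂ * (m : ℝ) ^ (α₂ - 1) * ((m - j + 1 : ℕ) : ℝ) ^ (α₁ - 1) := by
    intro j hj
    simp only [Finset.mem_Icc] at hj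
    have hj1 := hj.1; have hj2 := hj.2
    have hi1 : (1 : ℕ) ≤ m - j + 1 := by omega
    have hi2 : m - j + 1 ≤ m := by omega
    have hiR : ((m - j + 1 : ℕ) : ℝ) ≤ (m : ℝ) := by exact_mod_cast hi2
    have hjR : ((j : ℕ) : ℝ) ≤ (m : ℝ) := by exact_mod_cast hj2
    have hjpos : (0 : ℝ) < (j : ℝ) := by exact_mod_cast hj1
    have hipos : (0 : ℝ) < ((m - j + 1 : ℕ) : ℝ) := by exact_mod_cast hi1
    have hb1 : (0 : ℝ) ≤ (j : ℝ) ^ (α₂ - 1) := Real.rpow_nonneg hjpos.le _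
    have hb2 : (0 : ℝ) ≤ ((m - j + 1 : ℕ) : ℝ) ^ (α₁ - 1) := Real.rpow_nonneg hipos.le _
    rcases le_or_gt (2 * j) (m + 1) with hc | hc
    · -- m - j + 1 ≥ (m+1)/2 ≥ m/2
      have hhalf : (m : ℝ) / 2 ≤ ((m - j + 1 : ℕ) : ℝ) := by
        have : m + 1 ≤ 2 * (m - j + 1) := by omega
        have : ((m : ℝ) + 1) ≤ 2 * ((m - j + 1 : ℕ) : ℝ) := by exact_mod_cast this
        linarith
      have h1 : ((m - j + 1 : ℕ) : ℝ) ^ (α₁ - 1) ≤ K₁ * (m : ℝ) ^ (α₁ - 1) :=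
        aux_half_bound hα₁ hm0 hhalf hiR
      have hK₂m : 0 ≤ K₂ * (m : ℝ) ^ (α₂ - 1) := by
        have := Real.rpow_pos_of_pos (show (0:ℝ) < 2 by norm_num) (1 - α₂)
        have := Real.rpow_nonneg hm0.le (α₂ - 1)
        positivity
      nlinarith [mul_le_mul_of_nonneg_right h1 hb1, mul_nonneg hK₂m hb2]
    · -- j ≥ m/2
      have hhalf : (m : ℝ) / 2 ≤ (j : ℝ) := by
        have : m ≤ 2 * j := by omega
        have : (m : ℝ) ≤ 2 * (j : ℝ) := by exact_mod_cast this
        linarith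
      have h1 : (j : ℝ) ^ (α₂ - 1) ≤ K₂ * (m : ℝ) ^ (α₂ - 1) :=
        aux_half_bound hα₂ hm0 hhalf hjR
      have hK₁m : 0 ≤ K₁ * (m : ℝ) ^ (α₁ - 1) := by
        have := Real.rpow_pos_of_pos (show (0:ℝ) < 2 by norm_num) (1 - α₁)
        have := Real.rpow_nonneg hm0.le (α₁ - 1)
        positivity
      nlinarith [mul_le_mul_of_nonneg_right h1 hb2, mul_nonneg hK₁m hb1]
  calc ∑ j ∈ Finset.Icc 1 m, ((m - j + 1 : ℕ) : ℝ) ^ (α₁ - 1) * (j : ℝ) ^ (α₂ - 1)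
      ≤ ∑ j ∈ Finset.Icc 1 m,
          (K₁ * (m : ℝ) ^ (α₁ - 1) * (j : ℝ) ^ (α₂ - 1)
            + K₂ * (m : ℝ) ^ (α₂ - 1) * ((m - j + 1 : ℕ) : ℝ) ^ (α₁ - 1)) :=
        Finset.sum_le_sum hterm
    _ = K₁ * (m : ℝ) ^ (α₁ - 1) * (∑ j ∈ Finset.Icc 1 m, (j : ℝ) ^ (α₂ - 1))
        + K₂ * (m : ℝ) ^ (α₂ - 1)
            * (∑ j ∈ Finset.Icc 1 m, ((m - j + 1 : ℕ) : ℝ) ^ (α₁ - 1)) := by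
        rw [Finset.sum_add_distrib, Finset.mul_sum, Finset.mul_sum]
    _ = K₁ * (m : ℝ) ^ (α₁ - 1) * (∑ j ∈ Finset.Icc 1 m, (j : ℝ) ^ (α₂ - 1))
        + K₂ * (m : ℝ) ^ (α₂ - 1) * (∑ i ∈ Finset.Icc 1 m, (i : ℝ) ^ (α₁ - 1)) := by
        rw [aux_sum_reflect m (fun i => (i : ℝ) ^ (α₁ - 1))]
    _ ≤ K₁ * (m : ℝ) ^ (α₁ - 1) * ((1 / α₂ + 1) * (m : ℝ) ^ α₂)
        + K₂ * (m : ℝ) ^ (α₂ - 1) * ((1 / α₁ + 1) * (m : ℝ) ^ α₁) := by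
        have hK₁0 : 0 ≤ K₁ * (m : ℝ) ^ (α₁ - 1) := by
          have := Real.rpow_pos_of_pos (show (0:ℝ) < 2 by norm_num) (1 - α₁)
          have := Real.rpow_nonneg hm0.le (α₁ - 1)
          positivity
        have hK₂0 : 0 ≤ K₂ * (m : ℝ) ^ (α₂ - 1) := by
          have := Real.rpow_pos_of_pos (show (0:ℝ) < 2 by norm_num) (1 - α₂)
          have := Real.rpow_nonneg hm0.le (α₂ - 1)
          positivity
        exact add_le_add (mul_le_mul_of_nonneg_left (aux_pow_sum hα₂ m) hK₁0)
          (mul_le_mul_of_nonneg_left (aux_pow_sum hα₁ m) hK₂0)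
    _ = (K₁ * (1 / α₂ + 1) + K₂ * (1 / α₁ + 1)) * (m : ℝ) ^ (α₁ + α₂ - 1) := by
        have e1 : (m : ℝ) ^ (α₁ - 1) * (m : ℝ) ^ α₂ = (m : ℝ) ^ (α₁ + α₂ - 1) := by
          rw [← Real.rpow_add hm0, show α₁ - 1 + α₂ = α₁ + α₂ - 1 by ring]
        have e2 : (m : ℝ) ^ (α₂ - 1) * (m : ℝ) ^ α₁ = (m : ℝ) ^ (α₁ + α₂ - 1) := by
          rw [← Real.rpow_add hm0, show α₂ - 1 + α₁ = α₁ + α₂ - 1 by ring]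
        linear_combination (K₁ * (1 / α₂ + 1)) * e1 + (K₂ * (1 / α₁ + 1)) * e2

/-- Discrete convolution estimate (Lemma 3.8, eq. (3.46)): with `t_j = j * Δt`,
`Δt * ∑_{j=1}^m t_{m-j+1}^{-1+α₁} t_j^{-1+α₂} ≤ C t_m^{-1+α₁+α₂}`. -/
theorem discrete_convolution_estimate :
    ∀ α₁ α₂ : ℝ, 0 < α₁ → 0 < α₂ →
      ∃ C : ℝ, 0 < C ∧
        ∀ Δt : ℝ, 0 < Δt → ∀ m : ℕ, 1 ≤ m →
          Δt * ∑ j ∈ Finset.Icc 1 m,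
              (((m - j + 1 : ℕ) : ℝ) * Δt) ^ (-1 + α₁) * ((j : ℝ) * Δt) ^ (-1 + α₂)
            ≤ C * ((m : ℝ) * Δt) ^ (-1 + α₁ + α₂) := by
  intro α₁ α₂ hα₁ hα₂
  refine ⟨((2:ℝ) ^ (1 - α₁) + 1) * (1 / α₂ + 1) + ((2:ℝ) ^ (1 - α₂) + 1) * (1 / α₁ + 1),
    ?_, ?_⟩
  · have h1 := Real.rpow_pos_of_pos (show (0:ℝ) < 2 by norm_num) (1 - α₁)
    have h2 := Real.rpow_pos_of_pos (show (0:ℝ) < 2 by norm_num) (1 - α₂)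
    positivity
  intro Δt hΔ m hm
  set C : ℝ := ((2:ℝ) ^ (1 - α₁) + 1) * (1 / α₂ + 1) + ((2:ℝ) ^ (1 - α₂) + 1) * (1 / α₁ + 1)
    with hCdef
  have hm0 : (0 : ℝ) < m := by exact_mod_cast hm
  simp only [show (-1 + α₁ : ℝ) = α₁ - 1 from by ring,
    show (-1 + α₂ : ℝ) = α₂ - 1 from by ring,
    show (α₁ - 1 + α₂ : ℝ) = α₁ + α₂ - 1 from by ring]
  have hsum : ∑ j ∈ Finset.Icc 1 m,
      (((m - j + 1 : ℕ) : ℝ) * Δt) ^ (α₁ - 1) * ((j : ℝ) * Δt) ^ (α₂ - 1)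
      = (Δt ^ (α₁ - 1) * Δt ^ (α₂ - 1)) *
          ∑ j ∈ Finset.Icc 1 m, ((m - j + 1 : ℕ) : ℝ) ^ (α₁ - 1) * (j : ℝ) ^ (α₂ - 1) := by
    rw [Finset.mul_sum]
    refine Finset.sum_congr rfl fun j _ => ?_
    rw [Real.mul_rpow (Nat.cast_nonneg _) hΔ.le, Real.mul_rpow (Nat.cast_nonneg _) hΔ.le]
    ring
  rw [hsum, Real.mul_rpow hm0.le hΔ.le]
  have hΔr : Δt * (Δt ^ (α₁ - 1) * Δt ^ (α₂ - 1)) = Δt ^ (α₁ + α₂ - 1) := by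
    rw [show α₁ + α₂ - 1 = 1 + ((α₁ - 1) + (α₂ - 1)) by ring, Real.rpow_add hΔ,
      Real.rpow_add hΔ, Real.rpow_one]
  have hS := aux_key hα₁ hα₂ m hm
  have hΔp : (0 : ℝ) < Δt ^ (α₁ + α₂ - 1) := Real.rpow_pos_of_pos hΔ _
  calc Δt * ((Δt ^ (α₁ - 1) * Δt ^ (α₂ - 1)) *
          ∑ j ∈ Finset.Icc 1 m, ((m - j + 1 : ℕ) : ℝ) ^ (α₁ - 1) * (j : ℝ) ^ (α₂ - 1))
      = Δt ^ (α₁ + α₂ - 1) *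
          ∑ j ∈ Finset.Icc 1 m, ((m - j + 1 : ℕ) : ℝ) ^ (α₁ - 1) * (j : ℝ) ^ (α₂ - 1) := by
        rw [← hΔr]; ring
    _ ≤ Δt ^ (α₁ + α₂ - 1) * (C * (m : ℝ) ^ (α₁ + α₂ - 1)) :=
        mul_le_mul_of_nonneg_left hS hΔp.le
    _ = C * ((m : ℝ) ^ (α₁ + α₂ - 1) * Δt ^ (α₁ + α₂ - 1)) := by ring
end

section
/- For all α ∈ [0,1) and α₂ > 0 there exists a constant C = C(α, α₂) > 0, depending only on α and α₂ (in particular independent of Δt and m), such that for every Δt > 0 and every integer m ≥ 1, Δt · Σ_{j=1}^{m} t_{m−j+1}^{−α} · t_j^{−1+α₂} ≤ C · t_m^{−α+α₂}. -/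
open Finset

lemma sum_rpow_aux {p : ℝ} (hp : 0 < p) (hp1 : p ≤ 1) (m : ℕ) :
    ∑ j ∈ Finset.Icc 1 m, (j : ℝ) ^ (p - 1) ≤ (m : ℝ) ^ p / p := by
  induction m with
  | zero => simp [Real.zero_rpow hp.ne']
  | succ n ih =>
    rw [Finset.sum_Icc_succ_top (by omega)]
    have ha : (0:ℝ) < (n:ℝ) + 1 := by positivity
    have key : ((n:ℝ)) ^ p + p * ((n:ℝ)+1) ^ (p-1) ≤ ((n:ℝ)+1) ^ p := by
      have hs : (-1:ℝ) ≤ -1/((n:ℝ)+1) := by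
        rw [neg_div, neg_le_neg_iff]
        rw [div_le_one ha]; linarith [Nat.cast_nonneg (α := ℝ) n]
      have hb := rpow_one_add_le_one_add_mul_self hs hp.le hp1
      have h1 : (1:ℝ) + -1/((n:ℝ)+1) = (n:ℝ)/((n:ℝ)+1) := by field_simp; ring
      rw [h1] at hb
      have h2 : ((n:ℝ)/((n:ℝ)+1)) ^ p = (n:ℝ)^p / ((n:ℝ)+1)^p :=
        Real.div_rpow (Nat.cast_nonneg n) ha.le p
      have h3 : ((n:ℝ)+1) ^ (p-1) = ((n:ℝ)+1)^p / ((n:ℝ)+1) := by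
        rw [Real.rpow_sub ha, Real.rpow_one]
      have hA : (0:ℝ) < ((n:ℝ)+1)^p := Real.rpow_pos_of_pos ha p
      rw [h2] at hb
      rw [h3]
      have hb' : (n:ℝ)^p ≤ (1 + p * (-1/((n:ℝ)+1))) * ((n:ℝ)+1)^p := by
        rw [← div_le_iff₀ hA]; exact hb
      have : (1 + p * (-1/((n:ℝ)+1))) * ((n:ℝ)+1)^p
          = ((n:ℝ)+1)^p - p * (((n:ℝ)+1)^p / ((n:ℝ)+1)) := by
        field_simp; ring
      rw [this] at hb'
      linarith
    push_cast
    have h4 : (↑n:ℝ)^p / p + ((n:ℝ)+1)^(p-1) ≤ ((n:ℝ)+1)^p / p := by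
      rw [div_add' _ _ _ hp.ne', div_le_div_iff_of_pos_right hp]
      linarith
    linarith

lemma sum_rpow_bound {q : ℝ} (hq : 0 < q) (m : ℕ) :
    ∑ j ∈ Finset.Icc 1 m, (j : ℝ) ^ (q - 1) ≤ (1/q + 1) * (m : ℝ) ^ q := by
  rcases le_or_gt q 1 with h | h
  · have := sum_rpow_aux hq h m
    have hm : (0:ℝ) ≤ (m:ℝ)^q := Real.rpow_nonneg (Nat.cast_nonneg m) q
    calc ∑ j ∈ Finset.Icc 1 m, (j : ℝ) ^ (q - 1) ≤ (m:ℝ)^q / q := this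
      _ = (1/q) * (m:ℝ)^q := by ring
      _ ≤ (1/q + 1) * (m : ℝ) ^ q := by nlinarith [mul_nonneg (by positivity : (0:ℝ) ≤ 1/q) hm]
  · rcases Nat.eq_zero_or_pos m with rfl | hm
    · simp [Real.zero_rpow hq.ne']
    have hm0 : (0:ℝ) < (m:ℝ) := by exact_mod_cast hm
    have hstep : ∑ j ∈ Finset.Icc 1 m, (j : ℝ) ^ (q - 1)
        ≤ ∑ _j ∈ Finset.Icc 1 m, (m : ℝ) ^ (q - 1) := by
      apply Finset.sum_le_sum
      intro j hj
      have hjm : (j:ℝ) ≤ (m:ℝ) := by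
        exact_mod_cast (Finset.mem_Icc.mp hj).2
      exact Real.rpow_le_rpow (Nat.cast_nonneg j) hjm (by linarith)
    have hcard : ∑ _j ∈ Finset.Icc 1 m, (m : ℝ) ^ (q - 1) = (m:ℝ) * (m:ℝ)^(q-1) := by
      rw [Finset.sum_const, Nat.card_Icc]
      simp [nsmul_eq_mul]
    have hmq : (m:ℝ) * (m:ℝ)^(q-1) = (m:ℝ)^q := by
      rw [← Real.rpow_one_add' (Nat.cast_nonneg m) (by linarith)]
      ring_nf
    have hmnn : (0:ℝ) ≤ (m:ℝ)^q := Real.rpow_nonneg (Nat.cast_nonneg m) q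
    calc ∑ j ∈ Finset.Icc 1 m, (j : ℝ) ^ (q - 1)
        ≤ (m:ℝ) * (m:ℝ)^(q-1) := by rw [← hcard]; exact hstep
      _ = (m:ℝ)^q := hmq
      _ ≤ (1/q + 1) * (m : ℝ) ^ q := by nlinarith [mul_nonneg (by positivity : (0:ℝ) ≤ 1/q) hmnn]

lemma sum_reflect_Icc (m : ℕ) (F : ℕ → ℝ) :
    ∑ j ∈ Finset.Icc 1 m, F (m - j + 1) = ∑ j ∈ Finset.Icc 1 m, F j := by
  apply Finset.sum_nbij' (fun j => m + 1 - j) (fun j => m + 1 - j)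
  · intro a ha; simp only [Finset.mem_Icc] at *; omega
  · intro a ha; simp only [Finset.mem_Icc] at *; omega
  · intro a ha; simp only [Finset.mem_Icc] at ha; omega
  · intro a ha; simp only [Finset.mem_Icc] at ha; omega
  · intro a ha; simp only [Finset.mem_Icc] at ha
    congr 1; omega

lemma conv_sum_bound {α α₂ : ℝ} (hα0 : 0 ≤ α) (hα1 : α < 1) (hα2 : 0 < α₂) :
    ∃ C : ℝ, 0 < C ∧ ∀ m : ℕ, 1 ≤ m →
      ∑ j ∈ Finset.Icc 1 m, ((m - j + 1 : ℕ) : ℝ) ^ (-α) * (j : ℝ) ^ (-1 + α₂)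
        ≤ C * (m : ℝ) ^ (-α + α₂) := by
  have h1α : (0:ℝ) < 1 - α := by linarith
  refine ⟨(2:ℝ)^α * (1/α₂ + 1) + 2 * (1/(1-α) + 1), ?_, ?_⟩
  · have h2 : (0:ℝ) < (2:ℝ)^α := Real.rpow_pos_of_pos two_pos α
    have : (0:ℝ) < 1/α₂ + 1 := by positivity
    have : (0:ℝ) < 1/(1-α) + 1 := by positivity
    positivity
  intro m hm
  have hm0 : (0:ℝ) < (m:ℝ) := by exact_mod_cast hm
  have hhalf : (0:ℝ) < (m:ℝ)/2 := by linarith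
  set k := m / 2 with hkdef
  have hkm : k ≤ m := Nat.div_le_self m 2
  -- split the sum
  have hIcc : Finset.Icc 1 m = Finset.Ioc 0 m := by
    rw [← Finset.Icc_add_one_left_eq_Ioc]; rfl
  have hsplit : ∑ j ∈ Finset.Icc 1 m, ((m - j + 1 : ℕ) : ℝ) ^ (-α) * (j : ℝ) ^ (-1 + α₂)
      = (∑ j ∈ Finset.Ioc 0 k, ((m - j + 1 : ℕ) : ℝ) ^ (-α) * (j : ℝ) ^ (-1 + α₂))
        + ∑ j ∈ Finset.Ioc k m, ((m - j + 1 : ℕ) : ℝ) ^ (-α) * (j : ℝ) ^ (-1 + α₂) := by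
    rw [hIcc, Finset.sum_Ioc_consecutive _ (Nat.zero_le k) hkm]
  rw [hsplit]
  -- bound on the first sum
  have hS1 : ∑ j ∈ Finset.Ioc 0 k, ((m - j + 1 : ℕ) : ℝ) ^ (-α) * (j : ℝ) ^ (-1 + α₂)
      ≤ ((m:ℝ)/2) ^ (-α) * ((1/α₂ + 1) * (m:ℝ) ^ α₂) := by
    have step1 : ∑ j ∈ Finset.Ioc 0 k, ((m - j + 1 : ℕ) : ℝ) ^ (-α) * (j : ℝ) ^ (-1 + α₂)
        ≤ ∑ j ∈ Finset.Ioc 0 k, ((m:ℝ)/2) ^ (-α) * (j : ℝ) ^ (-1 + α₂) := by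
      apply Finset.sum_le_sum
      intro j hj
      rw [Finset.mem_Ioc] at hj
      have hnat : m ≤ 2 * (m - j + 1) := by omega
      have hcast : (m:ℝ) ≤ 2 * ((m - j + 1 : ℕ) : ℝ) := by exact_mod_cast hnat
      have h1 : (m:ℝ)/2 ≤ ((m - j + 1 : ℕ) : ℝ) := by linarith
      have h2 : ((m - j + 1 : ℕ) : ℝ) ^ (-α) ≤ ((m:ℝ)/2) ^ (-α) :=
        Real.rpow_le_rpow_of_nonpos hhalf h1 (by linarith)
      exact mul_le_mul_of_nonneg_right h2 (Real.rpow_nonneg (Nat.cast_nonneg j) _)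
    have step2 : ∑ j ∈ Finset.Ioc 0 k, ((m:ℝ)/2) ^ (-α) * (j : ℝ) ^ (-1 + α₂)
        ≤ ((m:ℝ)/2) ^ (-α) * ((1/α₂ + 1) * (m:ℝ) ^ α₂) := by
      rw [← Finset.mul_sum]
      apply mul_le_mul_of_nonneg_left _ (Real.rpow_nonneg hhalf.le _)
      have hsub : Finset.Ioc 0 k ⊆ Finset.Icc 1 m := by
        intro x hx; rw [Finset.mem_Ioc] at hx; rw [Finset.mem_Icc]; omega
      calc ∑ j ∈ Finset.Ioc 0 k, (j : ℝ) ^ (-1 + α₂)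
          ≤ ∑ j ∈ Finset.Icc 1 m, (j : ℝ) ^ (-1 + α₂) := by
            apply Finset.sum_le_sum_of_subset_of_nonneg hsub
            intro i _ _; exact Real.rpow_nonneg (Nat.cast_nonneg i) _
        _ = ∑ j ∈ Finset.Icc 1 m, (j : ℝ) ^ (α₂ - 1) := by
            apply Finset.sum_congr rfl; intro j _; ring_nf
        _ ≤ (1/α₂ + 1) * (m:ℝ) ^ α₂ := sum_rpow_bound hα2 m
    exact step1.trans step2
  -- bound on the second sum
  have hS2 : ∑ j ∈ Finset.Ioc k m, ((m - j + 1 : ℕ) : ℝ) ^ (-α) * (j : ℝ) ^ (-1 + α₂)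
      ≤ ((1/(1-α) + 1) * (m:ℝ) ^ (1-α)) * (2 * (m:ℝ) ^ (-1 + α₂)) := by
    have hjbound : ∀ j ∈ Finset.Ioc k m, (j : ℝ) ^ (-1 + α₂) ≤ 2 * (m:ℝ) ^ (-1 + α₂) := by
      intro j hj
      rw [Finset.mem_Ioc] at hj
      have hjm : (j:ℝ) ≤ (m:ℝ) := by exact_mod_cast hj.2
      have hjhalf : (m:ℝ)/2 ≤ (j:ℝ) := by
        have hnat : m ≤ 2 * j := by omega
        have : (m:ℝ) ≤ 2 * (j:ℝ) := by exact_mod_cast hnat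
        linarith
      have hmnn : (0:ℝ) ≤ (m:ℝ) ^ (-1 + α₂) := Real.rpow_nonneg hm0.le _
      rcases le_or_gt α₂ 1 with hle | hgt
      · have h1 : (j:ℝ) ^ (-1 + α₂) ≤ ((m:ℝ)/2) ^ (-1 + α₂) :=
          Real.rpow_le_rpow_of_nonpos hhalf hjhalf (by linarith)
        have h2 : ((m:ℝ)/2) ^ (-1 + α₂) = (m:ℝ) ^ (-1 + α₂) / (2:ℝ) ^ (-1 + α₂) :=
          Real.div_rpow hm0.le (by norm_num) _
        have h3 : (m:ℝ) ^ (-1 + α₂) / (2:ℝ) ^ (-1 + α₂)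
            = (m:ℝ) ^ (-1 + α₂) * (2:ℝ) ^ (1 - α₂) := by
          rw [div_eq_mul_inv, ← Real.rpow_neg (by norm_num)]
          ring_nf
        have h4 : (2:ℝ) ^ (1 - α₂) ≤ 2 := by
          nth_rewrite 2 [← Real.rpow_one (2:ℝ)]
          exact Real.rpow_le_rpow_of_exponent_le one_le_two (by linarith)
        calc (j:ℝ) ^ (-1 + α₂) ≤ (m:ℝ) ^ (-1 + α₂) * (2:ℝ) ^ (1 - α₂) := by
              rw [← h3, ← h2]; exact h1
          _ ≤ 2 * (m:ℝ) ^ (-1 + α₂) := by nlinarith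
      · have h1 : (j:ℝ) ^ (-1 + α₂) ≤ (m:ℝ) ^ (-1 + α₂) :=
          Real.rpow_le_rpow (Nat.cast_nonneg j) hjm (by linarith)
        linarith
    have step1 : ∑ j ∈ Finset.Ioc k m, ((m - j + 1 : ℕ) : ℝ) ^ (-α) * (j : ℝ) ^ (-1 + α₂)
        ≤ ∑ j ∈ Finset.Ioc k m, ((m - j + 1 : ℕ) : ℝ) ^ (-α) * (2 * (m:ℝ) ^ (-1 + α₂)) := by
      apply Finset.sum_le_sum
      intro j hj
      exact mul_le_mul_of_nonneg_left (hjbound j hj) (Real.rpow_nonneg (Nat.cast_nonneg _) _)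
    have step2 : ∑ j ∈ Finset.Ioc k m, ((m - j + 1 : ℕ) : ℝ) ^ (-α) * (2 * (m:ℝ) ^ (-1 + α₂))
        ≤ ((1/(1-α) + 1) * (m:ℝ) ^ (1-α)) * (2 * (m:ℝ) ^ (-1 + α₂)) := by
      rw [← Finset.sum_mul]
      apply mul_le_mul_of_nonneg_right _ (by positivity)
      have hsub : Finset.Ioc k m ⊆ Finset.Icc 1 m := by
        intro x hx; rw [Finset.mem_Ioc] at hx; rw [Finset.mem_Icc]; omega
      calc ∑ j ∈ Finset.Ioc k m, ((m - j + 1 : ℕ) : ℝ) ^ (-α)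
          ≤ ∑ j ∈ Finset.Icc 1 m, ((m - j + 1 : ℕ) : ℝ) ^ (-α) := by
            apply Finset.sum_le_sum_of_subset_of_nonneg hsub
            intro i _ _; exact Real.rpow_nonneg (Nat.cast_nonneg _) _
        _ = ∑ j ∈ Finset.Icc 1 m, (j : ℝ) ^ (-α) :=
            sum_reflect_Icc m (fun i => (i:ℝ) ^ (-α))
        _ = ∑ j ∈ Finset.Icc 1 m, (j : ℝ) ^ ((1-α) - 1) := by
            apply Finset.sum_congr rfl; intro j _; ring_nf
        _ ≤ (1/(1-α) + 1) * (m:ℝ) ^ (1-α) := sum_rpow_bound h1α m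
    exact step1.trans step2
  -- combine
  have hm1 : (m:ℝ)^(-α) * (m:ℝ)^α₂ = (m:ℝ)^(-α+α₂) := (Real.rpow_add hm0 _ _).symm
  have hm2 : (m:ℝ)^(1-α) * (m:ℝ)^(-1+α₂) = (m:ℝ)^(-α+α₂) := by
    rw [← Real.rpow_add hm0]; ring_nf
  have h2pos : (0:ℝ) < (2:ℝ)^α := Real.rpow_pos_of_pos two_pos α
  have e1 : ((m:ℝ)/2) ^ (-α) * ((1/α₂ + 1) * (m:ℝ) ^ α₂)
      = (2:ℝ)^α * (1/α₂ + 1) * (m:ℝ) ^ (-α + α₂) := by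
    rw [Real.div_rpow hm0.le (by norm_num), Real.rpow_neg (by norm_num : (0:ℝ) ≤ 2), ← hm1]
    field_simp
  have e2 : ((1/(1-α) + 1) * (m:ℝ) ^ (1-α)) * (2 * (m:ℝ) ^ (-1 + α₂))
      = 2 * (1/(1-α) + 1) * (m:ℝ) ^ (-α + α₂) := by
    rw [← hm2]; ring
  rw [e1] at hS1
  rw [e2] at hS2
  linarith

/-- Discrete convolution estimate (Lemma 3.8, eq. (3.47)): with `t_j = j * Δt`,
`Δt * ∑_{j=1}^m t_{m-j+1}^{-α} t_j^{-1+α₂} ≤ C t_m^{-α+α₂}`. -/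
theorem discrete_convolution_estimate' :
    ∀ α α₂ : ℝ, 0 ≤ α → α < 1 → 0 < α₂ →
      ∃ C : ℝ, 0 < C ∧
        ∀ Δt : ℝ, 0 < Δt → ∀ m : ℕ, 1 ≤ m →
          Δt * ∑ j ∈ Finset.Icc 1 m,
              (((m - j + 1 : ℕ) : ℝ) * Δt) ^ (-α) * ((j : ℝ) * Δt) ^ (-1 + α₂)
            ≤ C * ((m : ℝ) * Δt) ^ (-α + α₂) := by
  intro α α₂ hα0 hα1 hα2
  obtain ⟨C, hC, hCbound⟩ := conv_sum_bound hα0 hα1 hα2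
  refine ⟨C, hC, ?_⟩
  intro Δt hΔ m hm
  have hsummand : ∀ j ∈ Finset.Icc 1 m,
      (((m - j + 1 : ℕ) : ℝ) * Δt) ^ (-α) * ((j : ℝ) * Δt) ^ (-1 + α₂)
        = ((m - j + 1 : ℕ) : ℝ) ^ (-α) * (j : ℝ) ^ (-1 + α₂)
          * (Δt ^ (-α) * Δt ^ (-1 + α₂)) := by
    intro j _
    rw [Real.mul_rpow (Nat.cast_nonneg _) hΔ.le, Real.mul_rpow (Nat.cast_nonneg _) hΔ.le]
    ring
  rw [Finset.sum_congr rfl hsummand, ← Finset.sum_mul]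
  have hpow : Δt * (Δt ^ (-α) * Δt ^ (-1 + α₂)) = Δt ^ (-α + α₂) := by
    rw [← Real.rpow_add hΔ]
    nth_rewrite 1 [← Real.rpow_one Δt]
    rw [← Real.rpow_add hΔ]
    ring_nf
  rw [mul_left_comm, hpow, Real.mul_rpow (Nat.cast_nonneg m) hΔ.le, ← mul_assoc]
  exact mul_le_mul_of_nonneg_right (hCbound m hm) (Real.rpow_nonneg hΔ.le _)
end

section
/- Let 0 ≤ s < T, α ∈ [0,1), and a, b ≥ 0. Let φ : (s, T] → [0, ∞) be continuous with sup_{t ∈ (s,T]} (t−s)^{α} φ(t) < ∞, and suppose that φ(t) ≤ a (t−s)^{−α} + b ∫_s^t φ(τ) dτ for all t ∈ (s, T]. Then φ(t) ≤ a (t−s)^{−α} · (1 + b (T−s) e^{b(T−s)} / (1−α)) for all t ∈ (s, T]. -/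
open MeasureTheory

/-- Singular Gronwall-type inequality (the continuous Gronwall step applied to (3.41)):
if `φ : (s,T] → [0,∞)` is continuous with `sup_{t ∈ (s,T]} (t−s)^α φ(t) < ∞` and
`φ(t) ≤ a (t−s)^{−α} + b ∫_s^t φ(τ) dτ` on `(s,T]`, then
`φ(t) ≤ a (t−s)^{−α} (1 + b (T−s) e^{b(T−s)} / (1−α))` on `(s,T]`. -/
theorem singular_gronwall (s T : ℝ) (hs : 0 ≤ s) (hsT : s < T)
    (α a b : ℝ) (hα0 : 0 ≤ α) (hα1 : α < 1) (ha : 0 ≤ a) (hb : 0 ≤ b)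
    (φ : ℝ → ℝ)
    (hφnonneg : ∀ t ∈ Set.Ioc s T, 0 ≤ φ t)
    (hφcont : ContinuousOn φ (Set.Ioc s T))
    (hφbdd : ∃ M : ℝ, ∀ t ∈ Set.Ioc s T, (t - s) ^ α * φ t ≤ M)
    (hineq : ∀ t ∈ Set.Ioc s T, φ t ≤ a * (t - s) ^ (-α) + b * ∫ τ in s..t, φ τ) :
    ∀ t ∈ Set.Ioc s T,
      φ t ≤ a * (t - s) ^ (-α) * (1 + b * (T - s) * Real.exp (b * (T - s)) / (1 - α)) := by
  obtain ⟨M, hM⟩ := hφbdd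
  set β : ℝ := 1 - α with hβdef
  have hβ0 : 0 < β := by simp only [hβdef]; linarith
  have hβne : β ≠ 0 := ne_of_gt hβ0
  have hM0 : 0 ≤ M := by
    have hT : T ∈ Set.Ioc s T := ⟨hsT, le_rfl⟩
    have h1 : 0 ≤ (T - s) ^ α * φ T :=
      mul_nonneg (Real.rpow_nonneg (by linarith) α) (hφnonneg T hT)
    linarith [hM T hT]
  -- pointwise bound φ τ ≤ M (τ-s)^(-α) on Ioc s T
  have hφM : ∀ τ ∈ Set.Ioc s T, φ τ ≤ M * (τ - s) ^ (-α) := by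
    intro τ hτ
    have h1 : (0:ℝ) < τ - s := by linarith [hτ.1]
    have h2 : (0:ℝ) < (τ - s) ^ α := Real.rpow_pos_of_pos h1 α
    have h3 := hM τ hτ
    have h4 : (τ - s) ^ (-α) = ((τ - s) ^ α)⁻¹ := by
      rw [Real.rpow_neg h1.le]
    rw [h4, ← div_eq_mul_inv, le_div_iff₀ h2, mul_comm]
    exact h3
  -- integrability of the singular weight
  have hint_rpow : ∀ t : ℝ, IntervalIntegrable (fun τ => (τ - s) ^ (-α)) volume s t := by
    intro t
    have h := (intervalIntegral.intervalIntegrable_rpow' (a := s - s) (b := t - s)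
      (r := -α) (by linarith)).comp_sub_right s
    simpa using h
  -- integrability of φ
  have hφint : ∀ t ∈ Set.Ioc s T, IntervalIntegrable φ volume s t := by
    intro t ht
    rw [intervalIntegrable_iff_integrableOn_Ioc_of_le ht.1.le]
    have hsub : Set.Ioc s t ⊆ Set.Ioc s T := Set.Ioc_subset_Ioc le_rfl ht.2
    have hmeas : AEStronglyMeasurable φ (volume.restrict (Set.Ioc s t)) :=
      (hφcont.aestronglyMeasurable measurableSet_Ioc).mono_measure
        (Measure.restrict_mono hsub le_rfl)
    have hgint : IntegrableOn (fun τ => M * (τ - s) ^ (-α)) (Set.Ioc s t) volume :=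
      ((hint_rpow t).const_mul M).1
    refine hgint.integrable.mono' hmeas ?_
    rw [ae_restrict_iff' measurableSet_Ioc]
    filter_upwards with τ hτ
    rw [Real.norm_eq_abs, abs_of_nonneg (hφnonneg τ (hsub hτ))]
    exact hφM τ (hsub hτ)
  set F : ℝ → ℝ := fun t => ∫ τ in s..t, φ τ with hFdef
  have hFcont : ContinuousOn F (Set.Icc s T) := by
    have := intervalIntegral.continuousOn_primitive_interval'
      (hφint T ⟨hsT, le_rfl⟩) (Set.left_mem_uIcc)
    rwa [Set.uIcc_of_le hsT.le] at this
  set G : ℝ → ℝ := fun t => a / β * (Real.exp (b * (t - s)) * (t - s) ^ β) with hGdef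
  have hGnonneg : ∀ t, s ≤ t → 0 ≤ G t := by
    intro t ht
    have : (0:ℝ) ≤ (t - s) ^ β := Real.rpow_nonneg (by linarith) β
    positivity
  have hGcont : Continuous G := by
    refine continuous_const.mul (Continuous.mul ?_ ?_)
    · exact Real.continuous_exp.comp (by fun_prop)
    · refine continuous_iff_continuousAt.2 fun x => ?_
      exact (Real.continuousAt_rpow_const _ _ (Or.inr hβ0.le)).comp (by fun_prop)
  have hG' : ∀ x, s < x →
      HasDerivAt G (b * G x + a * Real.exp (b * (x - s)) * (x - s) ^ (-α)) x := by
    intro x hx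
    have hxs : (0:ℝ) < x - s := by linarith
    have hlin : HasDerivAt (fun t : ℝ => b * (t - s)) b x := by
      simpa using ((hasDerivAt_id x).sub_const s).const_mul b
    have hE : HasDerivAt (fun t => Real.exp (b * (t - s)))
        (Real.exp (b * (x - s)) * b) x := (Real.hasDerivAt_exp _).comp x hlin
    have hsub : HasDerivAt (fun t : ℝ => t - s) 1 x := (hasDerivAt_id x).sub_const s
    have hP : HasDerivAt (fun t : ℝ => (t - s) ^ β)
        (1 * β * (x - s) ^ (β - 1)) x :=
      hsub.rpow_const (Or.inl hxs.ne')
    have hmul := (hE.mul hP).const_mul (a / β)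
    convert hmul using 1
    case e'_4 | e'_5 | e'_8 => rfl
    have hβ1 : β - 1 = -α := by rw [hβdef]; ring
    rw [hβ1]
    have hsplit : (x - s) ^ β = (x - s) ^ (-α) * (x - s) := by
      rw [hβdef, show (1:ℝ) - α = -α + 1 by ring, Real.rpow_add hxs, Real.rpow_one]
    simp only [hGdef]
    field_simp
  intro t ht
  have hts : (0:ℝ) < t - s := by linarith [ht.1]
  have htT : t ≤ T := ht.2
  -- Step A : F t ≤ G t
  have hFG : F t ≤ G t := by
    have key : ∀ ε ∈ Set.Ioo (0:ℝ) (t - s),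
        F t - G t ≤ M / β * ε ^ β * Real.exp (b * (T - s)) := by
      intro ε hε
      set a' : ℝ := s + ε with ha'def
      have ha's : s < a' := by simp [ha'def]; linarith [hε.1]
      have ha't : a' < t := by simp [ha'def]; linarith [hε.2]
      have ha'T : a' ≤ T := le_trans ha't.le htT
      -- initial bound : F a' ≤ M/β * ε^β
      have hFa' : F a' ≤ M / β * ε ^ β := by
        have hIφ : IntegrableOn φ (Set.Ioc s a') volume := (hφint a' ⟨ha's, ha'T⟩).1
        have hIg : IntegrableOn (fun τ => M * (τ - s) ^ (-α)) (Set.Ioc s a') volume :=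
          ((hint_rpow a').const_mul M).1
        have hmono : F a' ≤ ∫ τ in s..a', M * (τ - s) ^ (-α) := by
          simp only [hFdef, intervalIntegral.integral_of_le ha's.le]
          refine setIntegral_mono_on hIφ hIg measurableSet_Ioc ?_
          intro τ hτ
          exact hφM τ (Set.Ioc_subset_Ioc le_rfl ha'T hτ)
        have hcalc : (∫ τ in s..a', M * (τ - s) ^ (-α)) = M / β * ε ^ β := by
          rw [intervalIntegral.integral_const_mul]
          have h1 : (∫ τ in s..a', (τ - s) ^ (-α)) = ∫ x in (s - s)..(a' - s), x ^ (-α) :=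
            intervalIntegral.integral_comp_sub_right (fun x => x ^ (-α)) s
          rw [h1]
          have h2 : s - s = 0 := by ring
          have h3 : a' - s = ε := by simp [ha'def]
          rw [h2, h3, integral_rpow (Or.inl (by linarith))]
          rw [show -α + 1 = β by rw [hβdef]; ring,
            Real.zero_rpow hβne]
          ring
        linarith
      -- Gronwall on [a', t]
      have hgron := le_gronwallBound_of_liminf_deriv_right_le
        (f := fun x => F x - G x)
        (f' := fun x => φ x - (b * G x + a * Real.exp (b * (x - s)) * (x - s) ^ (-α)))
        (δ := M / β * ε ^ β) (K := b) (ε := 0) (a := a') (b := t)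
        ((hFcont.mono (Set.Icc_subset_Icc ha's.le htT)).sub hGcont.continuousOn)
        ?_ ?_ ?_ t ⟨ha't.le, le_rfl⟩
      · rw [gronwallBound_ε0] at hgron
        have hexp : Real.exp (b * (t - a')) ≤ Real.exp (b * (T - s)) := by
          apply Real.exp_le_exp.2
          apply mul_le_mul_of_nonneg_left _ hb
          simp [ha'def]; linarith [hε.1]
        have hδ0 : 0 ≤ M / β * ε ^ β := by
          have : (0:ℝ) ≤ ε ^ β := Real.rpow_nonneg hε.1.le β
          positivity
        calc F t - G t ≤ M / β * ε ^ β * Real.exp (b * (t - a')) := hgron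
          _ ≤ M / β * ε ^ β * Real.exp (b * (T - s)) :=
              mul_le_mul_of_nonneg_left hexp hδ0
      · -- liminf condition from actual derivatives
        intro x hx r hr
        have hxs : s < x := lt_of_lt_of_le ha's hx.1
        have hxT : x < T := lt_of_lt_of_le hx.2 htT
        have hmemIoo : x ∈ Set.Ioo s T := ⟨hxs, hxT⟩
        have hopen : Set.Ioo s T ∈ nhds x := Ioo_mem_nhds hxs hxT
        have hcontAt : ContinuousAt φ x :=
          (hφcont x ⟨hxs, hxT.le⟩).continuousAt
            (Filter.mem_of_superset hopen Set.Ioo_subset_Ioc_self)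
        have hmeasAt : StronglyMeasurableAtFilter φ (nhds x) volume :=
          (hφcont.mono Set.Ioo_subset_Ioc_self).stronglyMeasurableAtFilter
            isOpen_Ioo x hmemIoo
        have hF' : HasDerivAt F (φ x) x :=
          intervalIntegral.integral_hasDerivAt_right (hφint x ⟨hxs, hxT.le⟩) hmeasAt hcontAt
        have hD : HasDerivWithinAt (fun x => F x - G x)
            (φ x - (b * G x + a * Real.exp (b * (x - s)) * (x - s) ^ (-α)))
            (Set.Ici x) x :=
          (hF'.sub (hG' x hxs)).hasDerivWithinAt
        have := hD.liminf_right_slope_le hr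
        refine this.mono fun z hz => ?_
        rwa [slope_def_field, div_eq_inv_mul] at hz
      · -- initial value
        have : 0 ≤ G a' := hGnonneg a' ha's.le
        linarith
      · -- differential inequality
        intro x hx
        have hxs : s < x := lt_of_lt_of_le ha's hx.1
        have hxT : x ≤ T := le_trans hx.2.le htT
        have h1 := hineq x ⟨hxs, hxT⟩
        have he : 1 ≤ Real.exp (b * (x - s)) :=
          Real.one_le_exp (by nlinarith)
        have hp : (0:ℝ) ≤ (x - s) ^ (-α) := Real.rpow_nonneg (by linarith) _
        have hF : F x = ∫ τ in s..x, φ τ := rfl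
        rw [← hF] at h1
        show φ x - (b * G x + a * Real.exp (b * (x - s)) * (x - s) ^ (-α)) ≤
          b * (F x - G x) + 0
        nlinarith [mul_le_mul_of_nonneg_left he (mul_nonneg ha hp)]
    -- take ε → 0⁺
    have hlim : Filter.Tendsto (fun ε : ℝ => M / β * ε ^ β * Real.exp (b * (T - s)))
        (nhdsWithin 0 (Set.Ioi 0)) (nhds 0) := by
      have h1 : Filter.Tendsto (fun ε : ℝ => ε ^ β) (nhds 0) (nhds 0) := by
        have := (Real.continuousAt_rpow_const 0 β (Or.inr hβ0.le))
        simpa [Real.zero_rpow hβne] using this.tendsto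
      have h2 : Filter.Tendsto (fun ε : ℝ => M / β * ε ^ β * Real.exp (b * (T - s)))
          (nhds 0) (nhds (M / β * 0 * Real.exp (b * (T - s)))) :=
        ((h1.const_mul (M / β)).mul_const _)
      simpa using h2.mono_left nhdsWithin_le_nhds
    have hev : ∀ᶠ ε in nhdsWithin (0:ℝ) (Set.Ioi 0),
        F t - G t ≤ M / β * ε ^ β * Real.exp (b * (T - s)) := by
      filter_upwards [Ioo_mem_nhdsGT_of_mem (Set.left_mem_Ico.2 hts)] with ε hε
      exact key ε hε
    have := ge_of_tendsto hlim hev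
    linarith
  -- Step B : conclude
  have h1 := hineq t ht
  have hF : F t = ∫ τ in s..t, φ τ := rfl
  rw [← hF] at h1
  have h2 : b * G t ≤ a * (t - s) ^ (-α) * (b * (T - s) * Real.exp (b * (T - s)) / β) := by
    have hsplit : (t - s) ^ β = (t - s) ^ (-α) * (t - s) := by
      rw [hβdef, show (1:ℝ) - α = -α + 1 by ring, Real.rpow_add hts, Real.rpow_one]
    have hexp : Real.exp (b * (t - s)) ≤ Real.exp (b * (T - s)) := by
      apply Real.exp_le_exp.2
      exact mul_le_mul_of_nonneg_left (by linarith) hb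
    have hp : (0:ℝ) ≤ (t - s) ^ (-α) := Real.rpow_nonneg (by linarith) _
    have hexp0 : (0:ℝ) < Real.exp (b * (t - s)) := Real.exp_pos _
    simp only [hGdef]
    rw [hsplit]
    rw [div_eq_mul_inv, div_eq_mul_inv]
    have hβinv : (0:ℝ) ≤ β⁻¹ := by positivity
    nlinarith [mul_le_mul_of_nonneg_left hexp (mul_nonneg hp hts.le),
      mul_le_mul_of_nonneg_right (mul_le_mul_of_nonneg_left hexp hp) hts.le,
      mul_nonneg hp hts.le, Real.exp_pos (b * (T - s)),
      mul_le_mul_of_nonneg_right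
        (mul_le_mul (mul_le_mul_of_nonneg_left hexp hp)
          (show t - s ≤ T - s by linarith) hts.le
          (mul_nonneg hp (Real.exp_pos _).le)) (mul_nonneg (mul_nonneg ha hb) hβinv)]
    -- fallback
  have h3 : b * F t ≤ b * G t := mul_le_mul_of_nonneg_left hFG hb
  have : φ t ≤ a * (t - s) ^ (-α) + a * (t - s) ^ (-α) * (b * (T - s) * Real.exp (b * (T - s)) / β) := by
    linarith
  calc φ t ≤ a * (t - s) ^ (-α) + a * (t - s) ^ (-α) * (b * (T - s) * Real.exp (b * (T - s)) / β) := this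
    _ = a * (t - s) ^ (-α) * (1 + b * (T - s) * Real.exp (b * (T - s)) / (1 - α)) := by
        rw [hβdef]; ring
end
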